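/- If the three qubit observables M₁, M₂, M₃ are jointly (triplewise) compatible, i.e., all three are post-processings of a single POVM {E_λ}, then tr(X M₁ + Y M₂ + Z M₃) ≤ 6/√3 = 2√3. -/

import Mathlib

open Matrix
open scoped ComplexOrder

noncomputable section

def σX : Matrix (Fin 2) (Fin 2) ℂ := !![0, 1; 1, 0]
def σY : Matrix (Fin 2) (Fin 2) ℂ := !![0, -Complex.I; Complex.I, 0]
def σZ : Matrix (Fin 2) (Fin 2) ℂ := !![1, 0; 0, -1]

lemma quadform (E : Matrix (Fin 2) (Fin 2) ℂ) (hE : E.PosSemidef) (z0 z1 : ℂ) :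
    0 ≤ (starRingEnd ℂ z0 * (E 0 0 * z0 + E 0 1 * z1) + starRingEnd ℂ z1 * (E 1 0 * z0 + E 1 1 * z1)).re := by
  have h := hE.dotProduct_mulVec_nonneg ![z0, z1]
  simp [dotProduct, Matrix.mulVec, Fin.sum_univ_two] at h
  rw [Complex.le_def] at h
  convert h.1 using 2
  simp

lemma entry_facts (E : Matrix (Fin 2) (Fin 2) ℂ) (hE : E.PosSemidef) :
    (E 0 0).im = 0 ∧ (E 1 1).im = 0 ∧ E 1 0 = starRingEnd ℂ (E 0 1) ∧
    0 ≤ (E 0 0).re ∧ 0 ≤ (E 1 1).re ∧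
    (E 0 1).re ^ 2 + (E 0 1).im ^ 2 ≤ (E 0 0).re * (E 1 1).re := by
  have herm10 : E 1 0 = starRingEnd ℂ (E 0 1) := by
    have := congrFun (congrFun hE.1 1) 0
    simpa [Matrix.conjTranspose_apply] using this.symm
  have h00 : (E 0 0).im = 0 := by
    have := congrFun (congrFun hE.1 0) 0
    simp [Matrix.conjTranspose_apply] at this
    have := congrArg Complex.im this
    simp at this; linarith
  have h11 : (E 1 1).im = 0 := by
    have := congrFun (congrFun hE.1 1) 1
    simp [Matrix.conjTranspose_apply] at this
    have := congrArg Complex.im this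
    simp at this; linarith
  set a := (E 0 0).re; set d := (E 1 1).re
  set u := (E 0 1).re; set v := (E 0 1).im
  have ha : 0 ≤ a := by
    have := quadform E hE 1 0; simpa using this
  have hd : 0 ≤ d := by
    have := quadform E hE 0 1; simpa using this
  refine ⟨h00, h11, herm10, ha, hd, ?_⟩
  -- three instantiations
  have f1 := quadform E hE (E 0 1) (-(E 0 0))
  have f2 := quadform E hE (E 1 1) (-(E 1 0))
  have f3 := quadform E hE (E 0 1) (-1)
  rw [herm10] at f1 f2 f3
  simp only [Complex.add_re, Complex.mul_re, Complex.mul_im, Complex.add_im, Complex.neg_re,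
    Complex.neg_im, Complex.conj_re, Complex.conj_im, Complex.one_re, Complex.one_im,
    Complex.mul_re, Complex.mul_im, h00, h11] at f1 f2 f3
  rcases eq_or_lt_of_le (by positivity : (0:ℝ) ≤ a + d) with h | h
  · nlinarith [f3]
  · nlinarith [f1, f2]

lemma key (c0 c1 c2 : ℝ) (h0 : c0^2 ≤ 1) (h1 : c1^2 ≤ 1) (h2 : c2^2 ≤ 1)
    (E : Matrix (Fin 2) (Fin 2) ℂ) (hE : E.PosSemidef) :
    (((c0:ℂ) • (σX*E) + (c1:ℂ) • (σY*E) + (c2:ℂ) • (σZ*E)).trace).re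
      ≤ Real.sqrt 3 * (E.trace).re := by
  obtain ⟨h00, h11, h10, ha, hd, hb⟩ := entry_facts E hE
  set a := (E 0 0).re; set d := (E 1 1).re
  set u := (E 0 1).re; set v := (E 0 1).im
  have hL : (((c0:ℂ) • (σX*E) + (c1:ℂ) • (σY*E) + (c2:ℂ) • (σZ*E)).trace).re
      = 2*c0*u - 2*c1*v + c2*(a-d) := by
    simp [Matrix.trace_fin_two, Matrix.mul_apply, Fin.sum_univ_two, σX, σY, σZ, h10, Matrix.vecMul, dotProduct,
      Complex.add_re, Complex.mul_re, Complex.mul_im, Complex.ofReal_re, Complex.ofReal_im,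
      Complex.I_re, Complex.I_im, h00, h11]
    ring
  have hR : (E.trace).re = a + d := by simp [Matrix.trace_fin_two, a, d]
  rw [hL, hR]
  have hsq : (2*c0*u - 2*c1*v + c2*(a-d))^2 ≤ 3*(a+d)^2 := by
    nlinarith [sq_nonneg (c0*(-2*v) - c1*(2*u)), sq_nonneg (c0*(a-d) - c2*(2*u)),
      sq_nonneg (c1*(a-d) + c2*(2*v)), mul_nonneg ha hd, sq_nonneg (a-d), sq_nonneg (a+d),
      mul_nonneg (mul_nonneg ha hd) (sub_nonneg.2 h2),
      mul_nonneg (sub_nonneg.2 h0) (sq_nonneg (a-d)),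
      mul_nonneg (sub_nonneg.2 h1) (sq_nonneg (a-d)),
      mul_nonneg (sub_nonneg.2 h0) (sub_nonneg.2 hb),
      mul_nonneg (sub_nonneg.2 h1) (sub_nonneg.2 hb),
      mul_nonneg (sub_nonneg.2 h2) (sub_nonneg.2 hb)]
  set L := 2*c0*u - 2*c1*v + c2*(a-d)
  have h1' : L ≤ |L| := le_abs_self L
  have h2' : |L| = Real.sqrt (L^2) := (Real.sqrt_sq_eq_abs L).symm
  have h3' : Real.sqrt (L^2) ≤ Real.sqrt (3*(a+d)^2) := Real.sqrt_le_sqrt hsq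
  have h4' : Real.sqrt (3*(a+d)^2) = Real.sqrt 3 * (a+d) := by
    rw [Real.sqrt_mul (by norm_num), Real.sqrt_sq (by positivity)]
  linarith

/-- If three qubit observables `M x = M_{0|x} - M_{1|x}` arise from dichotomic POVMs
that are all post-processings of a single parent POVM `{E_λ}` (triplewise compatible),
then `tr(X M₁ + Y M₂ + Z M₃) ≤ 2√3`. -/
theorem triplewise_compatible_witness_bound
    (M : Fin 3 → Matrix (Fin 2) (Fin 2) ℂ)
    (hcompat : ∃ (n : ℕ) (E : Fin n → Matrix (Fin 2) (Fin 2) ℂ)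
        (p : Fin 3 → Fin n → Fin 2 → ℝ),
      (∀ l, (E l).PosSemidef) ∧ (∑ l, E l) = 1 ∧
      (∀ x l a, 0 ≤ p x l a) ∧ (∀ x l, ∑ a, p x l a = 1) ∧
      (∀ x, M x = ∑ l, ((p x l 0 - p x l 1 : ℝ) : ℂ) • E l)) :
    ((σX * M 0 + σY * M 1 + σZ * M 2).trace).re ≤ 2 * Real.sqrt 3 := by
  obtain ⟨n, E, p, hEpsd, hEsum, hp0, hp1, hM⟩ := hcompat
  set c : Fin 3 → Fin n → ℝ := fun x l => p x l 0 - p x l 1 with hc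
  have hc2 : ∀ x l, (c x l)^2 ≤ 1 := by
    intro x l
    have h := hp1 x l
    rw [Fin.sum_univ_two] at h
    have h0 := hp0 x l 0
    have h1 := hp0 x l 1
    simp only [hc]
    nlinarith
  have hrw : σX * M 0 + σY * M 1 + σZ * M 2
      = ∑ l, ((c 0 l : ℂ) • (σX * E l) + (c 1 l : ℂ) • (σY * E l) + (c 2 l : ℂ) • (σZ * E l)) := by
    rw [hM 0, hM 1, hM 2, Finset.mul_sum, Finset.mul_sum, Finset.mul_sum, ← Finset.sum_add_distrib,
      ← Finset.sum_add_distrib]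
    refine Finset.sum_congr rfl fun l _ => ?_
    rw [Matrix.mul_smul, Matrix.mul_smul, Matrix.mul_smul]
  rw [hrw, Matrix.trace_sum]
  have hre : (∑ l, ((c 0 l : ℂ) • (σX * E l) + (c 1 l : ℂ) • (σY * E l)
      + (c 2 l : ℂ) • (σZ * E l)).trace).re
      = ∑ l, ((c 0 l : ℂ) • (σX * E l) + (c 1 l : ℂ) • (σY * E l)
      + (c 2 l : ℂ) • (σZ * E l)).trace.re := Complex.re_sum _ _
  rw [hre]
  have hbound : ∀ l ∈ Finset.univ, ((c 0 l : ℂ) • (σX * E l) + (c 1 l : ℂ) • (σY * E l)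
      + (c 2 l : ℂ) • (σZ * E l)).trace.re ≤ Real.sqrt 3 * ((E l).trace).re :=
    fun l _ => key (c 0 l) (c 1 l) (c 2 l) (hc2 0 l) (hc2 1 l) (hc2 2 l) (E l) (hEpsd l)
  calc ∑ l, ((c 0 l : ℂ) • (σX * E l) + (c 1 l : ℂ) • (σY * E l)
        + (c 2 l : ℂ) • (σZ * E l)).trace.re
      ≤ ∑ l, Real.sqrt 3 * ((E l).trace).re := Finset.sum_le_sum hbound
    _ = Real.sqrt 3 * (∑ l, (E l).trace).re := by
        rw [Complex.re_sum, Finset.mul_sum]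
    _ = 2 * Real.sqrt 3 := by
        rw [← Matrix.trace_sum, hEsum]
        simp [Matrix.trace_fin_two]
        ring

end
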